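/- Let k ≥ 2 and let G be a properly edge-coloured graph on n vertices with no rainbow cycle of length 2k. Then the number of triangles in G is at most C·|E(G)| for a constant C depending only on k. In particular, ex(n, C_3, rainbow-C_{2k}) = O(ex*(n, C_{2k})). -/

import Mathlib

open SimpleGraph

/-- A colouring of (potential) edges is proper on `G` if no two distinct edges of `G`
sharing a vertex receive the same colour. -/
def ProperColoring {V γ : Type*} (G : SimpleGraph V) (c : Sym2 V → γ) : Prop :=
  ∀ e f : Sym2 V, e ∈ G.edgeSet → f ∈ G.edgeSet → e ≠ f → (∃ v, v ∈ e ∧ v ∈ f) → c e ≠ c f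

/-- `G` (with colouring `c`) contains a rainbow cycle of length `t`. -/
def HasRainbowCycle {V γ : Type*} (G : SimpleGraph V) (c : Sym2 V → γ) (t : ℕ) : Prop :=
  ∃ (u : V) (w : G.Walk u u), w.IsCycle ∧ w.length = t ∧ (w.edges.map c).Nodup

variable {V : Type*} {G : SimpleGraph V}

def pathWalk (G : SimpleGraph V) (h : ℕ → V) :
    (n : ℕ) → (∀ i, i < n → G.Adj (h i) (h (i+1))) → G.Walk (h 0) (h n)
  | 0, _ => Walk.nil
  | (n+1), H => (pathWalk G h n (fun i hi => H i (by omega))).concat (H n (by omega))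

@[simp] lemma pathWalk_length (h : ℕ → V) (n : ℕ) (H) :
    (pathWalk G h n H).length = n := by
  induction n with
  | zero => rfl
  | succ n ih => simp [pathWalk, ih]

lemma pathWalk_support (h : ℕ → V) (n : ℕ) (H) :
    (pathWalk G h n H).support = (List.range (n+1)).map h := by
  induction n with
  | zero => rfl
  | succ n ih => simp [pathWalk, ih, List.range_succ]

lemma pathWalk_edges (h : ℕ → V) (n : ℕ) (H) :
    (pathWalk G h n H).edges = (List.range n).map (fun i => s(h i, h (i+1))) := by
  induction n with
  | zero => rfl
  | succ n ih => simp [pathWalk, ih, List.range_succ]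

def ValidPair (m a b : ℕ) : Prop := b < m ∧ (b = a + 1 ∨ b = a + 2)

def gfun (k j : ℕ) : ℕ := if j < k then 2*j else 4*k - 2*j - 1

lemma glt {k : ℕ} (hk : 1 ≤ k) (j : ℕ) : gfun k j < 2*k := by
  unfold gfun; split_ifs <;> omega

lemma ginj' {k : ℕ} (hk : 1 ≤ k) {x y : ℕ} (hx : x ≤ 2*k) (hy : y ≤ 2*k)
    (h : gfun k x = gfun k y) : x = y ∨ (x = 0 ∧ y = 2*k) ∨ (x = 2*k ∧ y = 0) := by
  unfold gfun at h; split_ifs at h <;> omega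

lemma gpair {k : ℕ} (hk : 2 ≤ k) {i : ℕ} (hi : i < 2*k) :
    ∃ a b, ValidPair (2*k) a b ∧
      ((gfun k i = a ∧ gfun k (i+1) = b) ∨ (gfun k i = b ∧ gfun k (i+1) = a)) := by
  rcases lt_or_ge (i+1) k with h1 | h1
  · exact ⟨2*i, 2*i+2, ⟨by omega, Or.inr rfl⟩,
      Or.inl ⟨by simp only [gfun, if_pos (by omega : i < k)],
        by simp only [gfun, if_pos h1]; omega⟩⟩
  rcases eq_or_lt_of_le h1 with h2 | h2
  · exact ⟨2*k-2, 2*k-1, ⟨by omega, Or.inl (by omega)⟩,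
      Or.inl ⟨by simp only [gfun, if_pos (by omega : i < k)]; omega,
        by simp only [gfun, if_neg (by omega : ¬ i+1 < k)]; omega⟩⟩
  rcases lt_or_ge (i+1) (2*k) with h3 | h3
  · exact ⟨4*k-2*i-3, 4*k-2*i-1, ⟨by omega, Or.inr (by omega)⟩,
      Or.inr ⟨by simp only [gfun, if_neg (by omega : ¬ i < k)],
        by simp only [gfun, if_neg (by omega : ¬ i+1 < k)]; omega⟩⟩
  · exact ⟨0, 1, ⟨by omega, Or.inl rfl⟩,
      Or.inr ⟨by simp only [gfun, if_neg (by omega : ¬ i < k)]; omega,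
        by simp only [gfun, if_neg (by omega : ¬ i+1 < k)]; omega⟩⟩

lemma hasRainbowCycle_of_inv {γ : Type*} (H : SimpleGraph V) (c : Sym2 V → γ)
    (k : ℕ) (hk : 2 ≤ k) (f : ℕ → V)
    (hinj : ∀ i j, i < 2*k → j < 2*k → f i = f j → i = j)
    (hadj : ∀ a b, ValidPair (2*k) a b → H.Adj (f a) (f b))
    (hcol : ∀ a b a' b', ValidPair (2*k) a b → ValidPair (2*k) a' b' →
      (a,b) ≠ (a',b') → c s(f a, f b) ≠ c s(f a', f b')) :
    HasRainbowCycle H c (2*k) := by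
  have hk1 : 1 ≤ k := by omega
  have Hadj : ∀ i, i < 2*k →
      H.Adj ((fun j => f (gfun k j)) i) ((fun j => f (gfun k j)) (i+1)) := by
    intro i hi
    obtain ⟨a, b, hv, hor⟩ := gpair hk hi
    show H.Adj (f (gfun k i)) (f (gfun k (i+1)))
    rcases hor with ⟨u1, u2⟩ | ⟨u1, u2⟩ <;> rw [u1, u2]
    · exact hadj a b hv
    · exact (hadj a b hv).symm
  have g0 : gfun k 0 = 0 := by unfold gfun; split_ifs <;> omega
  have g2k : gfun k (2*k) = 0 := by unfold gfun; split_ifs <;> omega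
  have e0 : (fun j => f (gfun k j)) 0 = f 0 := by simp [g0]
  have e1 : (fun j => f (gfun k j)) (2*k) = f 0 := by simp [g2k]
  set w : H.Walk (f 0) (f 0) :=
    (pathWalk H (fun j => f (gfun k j)) (2*k) Hadj).copy e0 e1 with hw
  have hlen : w.length = 2*k := by rw [hw]; simp
  have hedges : w.edges =
      (List.range (2*k)).map (fun i => s(f (gfun k i), f (gfun k (i+1)))) := by
    rw [hw, Walk.edges_copy, pathWalk_edges]
  have hcolnodup : (w.edges.map c).Nodup := by
    rw [hedges, List.map_map]
    refine List.Nodup.map_on ?_ List.nodup_range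
    intro i hi i' hi' hcc
    simp only [List.mem_range] at hi hi'
    by_contra hne
    obtain ⟨a, b, hv, hor⟩ := gpair hk hi
    obtain ⟨a', b', hv', hor'⟩ := gpair hk hi'
    have eedge : s(f (gfun k i), f (gfun k (i+1))) = s(f a, f b) := by
      rcases hor with ⟨u1, u2⟩ | ⟨u1, u2⟩ <;> rw [u1, u2]
      exact Sym2.eq_swap
    have eedge' : s(f (gfun k i'), f (gfun k (i'+1))) = s(f a', f b') := by
      rcases hor' with ⟨u1, u2⟩ | ⟨u1, u2⟩ <;> rw [u1, u2]
      exact Sym2.eq_swap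
    simp only [Function.comp] at hcc
    rw [eedge, eedge'] at hcc
    have hpq : (a, b) = (a', b') := by
      by_contra hpq
      exact hcol a b a' b' hv hv' hpq hcc
    have ha : a = a' := congrArg Prod.fst hpq
    have hb : b = b' := congrArg Prod.snd hpq
    have hle : i ≤ 2*k := by omega
    have hle1 : i+1 ≤ 2*k := by omega
    have hle' : i' ≤ 2*k := by omega
    have hle1' : i'+1 ≤ 2*k := by omega
    rcases hor with ⟨u1, u2⟩ | ⟨u1, u2⟩ <;> rcases hor' with ⟨w1, w2⟩ | ⟨w1, w2⟩
    · have q1 := ginj' hk1 hle hle' (by omega : gfun k i = gfun k i')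
      omega
    · have q1 := ginj' hk1 hle hle1' (by omega : gfun k i = gfun k (i'+1))
      have q2 := ginj' hk1 hle1 hle' (by omega : gfun k (i+1) = gfun k i')
      omega
    · have q1 := ginj' hk1 hle hle1' (by omega : gfun k i = gfun k (i'+1))
      have q2 := ginj' hk1 hle1 hle' (by omega : gfun k (i+1) = gfun k i')
      omega
    · have q1 := ginj' hk1 hle hle' (by omega : gfun k i = gfun k i')
      omega
  refine ⟨f 0, w, ?_, hlen, hcolnodup⟩
  rw [Walk.isCycle_def]
  refine ⟨⟨List.Nodup.of_map c hcolnodup⟩, ?_, ?_⟩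
  · intro hn
    rw [hn] at hlen
    simp at hlen
    omega
  · rw [hw, Walk.support_copy, pathWalk_support, List.range_succ_eq_map, List.map_cons,
      List.tail_cons, List.map_map]
    refine List.Nodup.map_on ?_ List.nodup_range
    intro i hi i' hi' hcc
    simp only [List.mem_range, Function.comp] at hi hi' hcc
    have h1 := hinj _ _ (glt hk1 (i+1)) (glt hk1 (i'+1)) hcc
    have h2 := ginj' hk1 (by omega : i+1 ≤ 2*k) (by omega : i'+1 ≤ 2*k) h1
    omega

lemma sym2_ne_of_ne {x z z' : V} (h1 : x ≠ z) (h2 : x ≠ z') (hne : z ≠ z') :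
    s(x, z) ≠ s(x, z') := by
  intro h
  rw [Sym2.eq_iff] at h
  rcases h with ⟨-, h⟩ | ⟨h, h'⟩
  · exact hne h
  · exact h2 h

lemma proper_nbr_inj {γ : Type*} {H : SimpleGraph V} {c : Sym2 V → γ}
    (hc : ProperColoring H c) {x z z' : V} (h1 : H.Adj x z) (h2 : H.Adj x z')
    (hne : z ≠ z') : c s(x, z) ≠ c s(x, z') := by
  refine hc _ _ h1 h2 (sym2_ne_of_ne h1.ne h2.ne hne) ⟨x, ?_, ?_⟩ <;> simp

def GInv {γ : Type*} (H : SimpleGraph V) (c : Sym2 V → γ) (f : ℕ → V) (m : ℕ) : Prop :=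
  (∀ i j, i < m → j < m → f i = f j → i = j) ∧
  (∀ a b, ValidPair m a b → H.Adj (f a) (f b)) ∧
  (∀ a b a' b', ValidPair m a b → ValidPair m a' b' → (a,b) ≠ (a',b') →
    c s(f a, f b) ≠ c s(f a', f b'))

lemma vp_ncard {m : ℕ} : {p : ℕ × ℕ | ValidPair m p.1 p.2}.ncard ≤ 2*m := by
  classical
  have hsub : {p : ℕ × ℕ | ValidPair m p.1 p.2} ⊆
      ((fun b => (b-1, b)) '' Set.Iio m) ∪ ((fun b => (b-2, b)) '' Set.Iio m) := by
    rintro ⟨a, b⟩ ⟨hb, hab | hab⟩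
    · have hab' : b = a + 1 := hab
      have hb' : b < m := hb
      subst hab'
      exact Or.inl ⟨a+1, hb', by simp⟩
    · have hab' : b = a + 2 := hab
      have hb' : b < m := hb
      subst hab'
      exact Or.inr ⟨a+2, hb', by simp⟩
  have hIio : (Set.Iio m) = ↑(Finset.Iio m) := by simp
  have hfin : (Set.Iio m).Finite := by rw [hIio]; exact (Finset.Iio m).finite_toSet
  have hIc : (Set.Iio m).ncard = m := by rw [hIio, Set.ncard_coe_finset, Nat.card_Iio]
  calc {p : ℕ × ℕ | ValidPair m p.1 p.2}.ncard
      ≤ (((fun b => (b-1, b)) '' Set.Iio m) ∪ ((fun b => (b-2, b)) '' Set.Iio m)).ncard :=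
        Set.ncard_le_ncard hsub (Set.Finite.union (hfin.image _) (hfin.image _))
    _ ≤ ((fun b => (b-1, b)) '' Set.Iio m).ncard + ((fun b => (b-2, b)) '' Set.Iio m).ncard :=
        Set.ncard_union_le _ _
    _ ≤ m + m := Nat.add_le_add ((Set.ncard_image_le hfin).trans hIc.le)
        ((Set.ncard_image_le hfin).trans hIc.le)
    _ = 2*m := by omega

lemma vp_finite {m : ℕ} : {p : ℕ × ℕ | ValidPair m p.1 p.2}.Finite := by
  have : {p : ℕ × ℕ | ValidPair m p.1 p.2} ⊆ (Set.Iio m) ×ˢ (Set.Iio m) := by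
    rintro ⟨a, b⟩ ⟨hb, hab⟩
    exact ⟨by simp; omega, by simpa using hb⟩
  exact Set.Finite.subset (Set.Finite.prod (Set.finite_Iio m) (Set.finite_Iio m)) this

lemma greedy {V γ : Type*} [Fintype V] (H : SimpleGraph V) (c : Sym2 V → γ)
    (hc : ProperColoring H c) (k : ℕ) (hk : 2 ≤ k)
    (hmin : ∀ u v, H.Adj u v → 100*k ≤ (H.neighborSet u ∩ H.neighborSet v).ncard)
    (u0 v0 : V) (h0 : H.Adj u0 v0) : HasRainbowCycle H c (2*k) := by
  classical
  have main : ∀ m, 2 ≤ m → m ≤ 2*k → ∃ f, GInv H c f m := by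
    intro m hm
    induction m, hm using Nat.le_induction with
    | base =>
      intro _
      refine ⟨fun i => if i = 0 then u0 else v0, ?_, ?_, ?_⟩
      · intro i j hi hj hf
        have hne := h0.ne
        interval_cases i <;> interval_cases j <;> simp_all [eq_comm]
      · rintro a b ⟨hb, hab⟩
        have : a = 0 ∧ b = 1 := by omega
        simpa [this.1, this.2] using h0
      · rintro a b a' b' ⟨hb, hab⟩ ⟨hb', hab'⟩ hne
        exfalso
        apply hne
        have : a = 0 ∧ b = 1 ∧ a' = 0 ∧ b' = 1 := by omega
        simp [this.1, this.2.1, this.2.2.1, this.2.2.2]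
    | succ m hm2 ih =>
      intro hmk
      obtain ⟨f, hinj, hadj, hcol⟩ := ih (by omega)
      obtain ⟨m', rfl⟩ : ∃ m', m = m' + 2 := ⟨m - 2, by omega⟩
      set x := f m' with hx
      set y := f (m'+1) with hy
      have hxy : H.Adj x y := hadj m' (m'+1) ⟨by omega, Or.inl rfl⟩
      set VP : Set (ℕ × ℕ) := {p | ValidPair (m'+2) p.1 p.2} with hVP
      set Bad : V → Set V :=
        fun v => {z | H.Adj v z ∧ ∃ p ∈ VP, c s(v, z) = c s(f p.1, f p.2)} with hBad
      have hBadcard : ∀ v, (Bad v).ncard ≤ 2*(m'+2) := by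
        intro v
        refine le_trans (Set.ncard_le_ncard_of_injOn
          (fun z => if h : z ∈ Bad v then h.2.choose else (0,0)) ?_ ?_ vp_finite) vp_ncard
        · intro z hz
          simp only [dif_pos hz]
          exact hz.2.choose_spec.1
        · intro z hz z' hz' hzz
          simp only [dif_pos hz, dif_pos hz'] at hzz
          by_contra hne
          have e1 := hz.2.choose_spec.2
          have e2 := hz'.2.choose_spec.2
          rw [hzz] at e1
          exact proper_nbr_inj hc hz.1 hz'.1 hne (e1.trans e2.symm)
      set F : Set V := (f '' Set.Iio (m'+2)) ∪ Bad x ∪ Bad y with hF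
      have hFcard : F.ncard ≤ 5*(m'+2) := by
        have h1 : (f '' Set.Iio (m'+2)).ncard ≤ m'+2 := by
          have : (Set.Iio (m'+2) : Set ℕ) = ↑(Finset.Iio (m'+2)) := by simp
          refine le_trans (Set.ncard_image_le (by rw [this]; exact (Finset.Iio _).finite_toSet)) ?_
          rw [this, Set.ncard_coe_finset, Nat.card_Iio]
        calc F.ncard ≤ ((f '' Set.Iio (m'+2)) ∪ Bad x).ncard + (Bad y).ncard :=
              Set.ncard_union_le _ _
          _ ≤ (f '' Set.Iio (m'+2)).ncard + (Bad x).ncard + (Bad y).ncard :=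
              Nat.add_le_add_right (Set.ncard_union_le _ _) _
          _ ≤ (m'+2) + 2*(m'+2) + 2*(m'+2) :=
              Nat.add_le_add (Nat.add_le_add h1 (hBadcard x)) (hBadcard y)
          _ = 5*(m'+2) := by omega
      have hzex : ∃ z, z ∈ (H.neighborSet x ∩ H.neighborSet y) ∧ z ∉ F := by
        by_contra hno
        push_neg at hno
        have hsub : (H.neighborSet x ∩ H.neighborSet y) ⊆ F := fun z hz => hno z hz
        have := (hmin x y hxy).trans (Set.ncard_le_ncard hsub (Set.toFinite F))
        omega
      obtain ⟨z, hzmem, hzF⟩ := hzex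
      have hzx : H.Adj x z := hzmem.1
      have hzy : H.Adj y z := hzmem.2
      have hznimg : z ∉ f '' Set.Iio (m'+2) := fun h => hzF (Or.inl (Or.inl h))
      have hznbx : z ∉ Bad x := fun h => hzF (Or.inl (Or.inr h))
      have hznby : z ∉ Bad y := fun h => hzF (Or.inr h)
      refine ⟨Function.update f (m'+2) z, ?_, ?_, ?_⟩
      · intro i j hi hj hf
        rcases eq_or_lt_of_le (Nat.lt_succ_iff.mp hi) with hi2 | hi2 <;>
          rcases eq_or_lt_of_le (Nat.lt_succ_iff.mp hj) with hj2 | hj2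
        · omega
        · rw [hi2, Function.update_self, Function.update_of_ne (by omega)] at hf
          exact absurd ⟨j, hj2, hf.symm⟩ hznimg
        · rw [hj2, Function.update_self, Function.update_of_ne (by omega)] at hf
          exact absurd ⟨i, hi2, hf⟩ hznimg
        · rw [Function.update_of_ne (by omega), Function.update_of_ne (by omega)] at hf
          exact hinj i j hi2 hj2 hf
      · rintro a b ⟨hb, hab⟩
        rcases eq_or_lt_of_le (Nat.lt_succ_iff.mp hb) with hb2 | hb2
        · rw [hb2, Function.update_self, Function.update_of_ne (by omega)]
          rcases hab with hab | hab
          · have : a = m'+1 := by omega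
            rw [this]
            exact hzy
          · have : a = m' := by omega
            rw [this]
            exact hzx
        · rw [Function.update_of_ne (by omega : a ≠ m'+2), Function.update_of_ne (by omega)]
          exact hadj a b ⟨hb2, hab⟩
      · rintro a b a' b' ⟨hb, hab⟩ ⟨hb', hab'⟩ hne
        rcases eq_or_lt_of_le (Nat.lt_succ_iff.mp hb) with hb2 | hb2 <;>
          rcases eq_or_lt_of_le (Nat.lt_succ_iff.mp hb') with hb2' | hb2'
        · -- both new
          subst hb2
          rw [hb2'] at hab' hne ⊢
          rw [Function.update_self, Function.update_of_ne (by omega : a ≠ m'+2),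
            Function.update_of_ne (by omega : a' ≠ m'+2)]
          have hane : a ≠ a' := by
            intro h
            exact hne (by rw [h])
          have hxzne : ∀ w w' : V, w ≠ w' → H.Adj w z → H.Adj w' z →
              c s(w, z) ≠ c s(w', z) := by
            intro w w' hww hw hw'
            have h2 := proper_nbr_inj hc hw.symm hw'.symm hww
            rwa [Sym2.eq_swap (a := z) (b := w), Sym2.eq_swap (a := z) (b := w')] at h2
          have hxyne : f a ≠ f a' := by
            intro h
            exact hane (hinj a a' (by omega) (by omega) h)
          have hfa : H.Adj (f a) z := by
            rcases hab with h | h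
            · have : a = m'+1 := by omega
              rw [this]; exact hzy
            · have : a = m' := by omega
              rw [this]; exact hzx
          have hfa' : H.Adj (f a') z := by
            rcases hab' with h | h
            · have : a' = m'+1 := by omega
              rw [this]; exact hzy
            · have : a' = m' := by omega
              rw [this]; exact hzx
          exact hxzne _ _ hxyne hfa hfa'
        · -- (a,b) new, (a',b') old
          subst hb2
          rw [Function.update_self, Function.update_of_ne (by omega : a ≠ m'+2),
            Function.update_of_ne (by omega : a' ≠ m'+2),
            Function.update_of_ne (by omega : b' ≠ m'+2)]
          have hold : (a', b') ∈ VP := ⟨hb2', hab'⟩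
          rcases hab with h | h
          · have ha : a = m'+1 := by omega
            rw [ha]
            intro hcontra
            exact hznby ⟨hzy, ⟨(a', b'), hold, hcontra⟩⟩
          · have ha : a = m' := by omega
            rw [ha]
            intro hcontra
            exact hznbx ⟨hzx, ⟨(a', b'), hold, hcontra⟩⟩
        · -- (a,b) old, (a',b') new
          subst hb2'
          rw [Function.update_self, Function.update_of_ne (by omega : a ≠ m'+2),
            Function.update_of_ne (by omega : a' ≠ m'+2),
            Function.update_of_ne (by omega : b ≠ m'+2)]
          have hold : (a, b) ∈ VP := ⟨hb2, hab⟩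
          rcases hab' with h | h
          · have ha : a' = m'+1 := by omega
            rw [ha]
            intro hcontra
            exact hznby ⟨hzy, ⟨(a, b), hold, hcontra.symm⟩⟩
          · have ha : a' = m' := by omega
            rw [ha]
            intro hcontra
            exact hznbx ⟨hzx, ⟨(a, b), hold, hcontra.symm⟩⟩
        · -- both old
          rw [Function.update_of_ne (by omega : a ≠ m'+2),
            Function.update_of_ne (by omega : b ≠ m'+2),
            Function.update_of_ne (by omega : a' ≠ m'+2),
            Function.update_of_ne (by omega : b' ≠ m'+2)]
          exact hcol a b a' b' ⟨hb2, hab⟩ ⟨hb2', hab'⟩ hne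
  obtain ⟨f, hinj, hadj, hcol⟩ := main (2*k) (by omega) le_rfl
  exact hasRainbowCycle_of_inv H c k hk f hinj hadj hcol

def TriSet {V : Type*} (G : SimpleGraph V) : Set (V × V × V) :=
  {t | G.Adj t.1 t.2.1 ∧ G.Adj t.2.1 t.2.2 ∧ G.Adj t.1 t.2.2}

lemma reduce {V : Type*} [Fintype V] (C : ℕ) :
    ∀ (n : ℕ) (G : SimpleGraph V), G.edgeSet.ncard ≤ n →
    6*C * G.edgeSet.ncard < (TriSet G).ncard →
    ∃ H, H ≤ G ∧ (∃ u v, H.Adj u v) ∧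
      ∀ u v, H.Adj u v → C ≤ (H.neighborSet u ∩ H.neighborSet v).ncard := by
  classical
  intro n
  induction n with
  | zero =>
    intro G hn hlt
    -- edgeSet empty → no triangles → contradiction
    exfalso
    have he : G.edgeSet.ncard = 0 := by omega
    have hempty : G.edgeSet = ∅ := by
      rwa [Set.ncard_eq_zero (Set.toFinite _)] at he
    have : (TriSet G).ncard = 0 := by
      rw [Set.ncard_eq_zero (Set.toFinite _)]
      ext ⟨x, y, z⟩
      simp only [TriSet, Set.mem_setOf_eq, Set.mem_empty_iff_false, iff_false]
      rintro ⟨h1, -, -⟩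
      have : s(x, y) ∈ G.edgeSet := h1
      rw [hempty] at this
      exact this
    omega
  | succ n ih =>
    intro G hn hlt
    by_cases hP : ∀ u v, G.Adj u v → C ≤ (G.neighborSet u ∩ G.neighborSet v).ncard
    · refine ⟨G, le_refl G, ?_, hP⟩
      have hTpos : 0 < (TriSet G).ncard := by omega
      rw [Set.ncard_pos (Set.toFinite _)] at hTpos
      obtain ⟨⟨x, y, z⟩, h1, -, -⟩ := hTpos
      exact ⟨x, y, h1⟩
    · push_neg at hP
      obtain ⟨u, v, huv, hlt2⟩ := hP
      set W := G.neighborSet u ∩ G.neighborSet v with hW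
      set G' := G.deleteEdges {s(u, v)} with hG'
      have hle : G' ≤ G := SimpleGraph.deleteEdges_le _
      have hmemE : s(u, v) ∈ G.edgeSet := huv
      have hE' : G'.edgeSet = G.edgeSet \ {s(u, v)} := SimpleGraph.edgeSet_deleteEdges _
      have hcard' : G'.edgeSet.ncard = G.edgeSet.ncard - 1 := by
        rw [hE']
        exact Set.ncard_diff_singleton_of_mem hmemE
      have hEpos : 1 ≤ G.edgeSet.ncard := by
        have : s(u, v) ∈ G.edgeSet := hmemE
        have := Set.ncard_pos (Set.toFinite G.edgeSet) |>.mpr ⟨_, this⟩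
        omega
      set L : Set (V × V × V) :=
        ((fun w => (u,v,w)) '' W) ∪ ((fun w => (v,u,w)) '' W) ∪ ((fun w => (u,w,v)) '' W) ∪
        ((fun w => (v,w,u)) '' W) ∪ ((fun w => (w,u,v)) '' W) ∪ ((fun w => (w,v,u)) '' W)
        with hL
      have hsub : TriSet G ⊆ TriSet G' ∪ L := by
        rintro ⟨x, y, z⟩ ⟨h1, h2, h3⟩
        by_cases e1 : s(x, y) = s(u, v)
        · right
          rw [Sym2.eq_iff] at e1
          rcases e1 with ⟨rfl, rfl⟩ | ⟨rfl, rfl⟩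
          · exact Or.inl (Or.inl (Or.inl (Or.inl (Or.inl ⟨z, ⟨h3, h2⟩, rfl⟩))))
          · exact Or.inl (Or.inl (Or.inl (Or.inl (Or.inr ⟨z, ⟨h2, h3⟩, rfl⟩))))
        by_cases e2 : s(y, z) = s(u, v)
        · right
          rw [Sym2.eq_iff] at e2
          rcases e2 with ⟨rfl, rfl⟩ | ⟨rfl, rfl⟩
          · exact Or.inl (Or.inr ⟨x, ⟨h1.symm, h3.symm⟩, rfl⟩)
          · exact Or.inr ⟨x, ⟨h3.symm, h1.symm⟩, rfl⟩
        by_cases e3 : s(x, z) = s(u, v)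
        · right
          rw [Sym2.eq_iff] at e3
          rcases e3 with ⟨rfl, rfl⟩ | ⟨rfl, rfl⟩
          · exact Or.inl (Or.inl (Or.inl (Or.inr ⟨y, ⟨h1, h2.symm⟩, rfl⟩)))
          · exact Or.inl (Or.inl (Or.inr ⟨y, ⟨h2.symm, h1⟩, rfl⟩))
        · left
          exact ⟨SimpleGraph.deleteEdges_adj.mpr ⟨h1, by simpa using e1⟩,
            SimpleGraph.deleteEdges_adj.mpr ⟨h2, by simpa using e2⟩,
            SimpleGraph.deleteEdges_adj.mpr ⟨h3, by simpa using e3⟩⟩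
      have hWC : W.ncard ≤ C := le_of_lt hlt2
      have hLcard : L.ncard ≤ 6*C := by
        have him : ∀ gg : V → V × V × V, (gg '' W).ncard ≤ C :=
          fun gg => (Set.ncard_image_le (Set.toFinite _)).trans hWC
        calc L.ncard ≤ (((fun w => (u,v,w)) '' W) ∪ ((fun w => (v,u,w)) '' W) ∪
              ((fun w => (u,w,v)) '' W) ∪ ((fun w => (v,w,u)) '' W) ∪
              ((fun w => (w,u,v)) '' W)).ncard + ((fun w => (w,v,u)) '' W).ncard :=
              Set.ncard_union_le _ _
          _ ≤ (((fun w => (u,v,w)) '' W) ∪ ((fun w => (v,u,w)) '' W) ∪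
              ((fun w => (u,w,v)) '' W) ∪ ((fun w => (v,w,u)) '' W)).ncard +
              ((fun w => (w,u,v)) '' W).ncard + ((fun w => (w,v,u)) '' W).ncard :=
              Nat.add_le_add_right (Set.ncard_union_le _ _) _
          _ ≤ (((fun w => (u,v,w)) '' W) ∪ ((fun w => (v,u,w)) '' W) ∪
              ((fun w => (u,w,v)) '' W)).ncard + ((fun w => (v,w,u)) '' W).ncard +
              ((fun w => (w,u,v)) '' W).ncard + ((fun w => (w,v,u)) '' W).ncard :=
              Nat.add_le_add_right (Nat.add_le_add_right (Set.ncard_union_le _ _) _) _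
          _ ≤ (((fun w => (u,v,w)) '' W) ∪ ((fun w => (v,u,w)) '' W)).ncard +
              ((fun w => (u,w,v)) '' W).ncard + ((fun w => (v,w,u)) '' W).ncard +
              ((fun w => (w,u,v)) '' W).ncard + ((fun w => (w,v,u)) '' W).ncard :=
              Nat.add_le_add_right (Nat.add_le_add_right (Nat.add_le_add_right
                (Set.ncard_union_le _ _) _) _) _
          _ ≤ ((fun w => (u,v,w)) '' W).ncard + ((fun w => (v,u,w)) '' W).ncard +
              ((fun w => (u,w,v)) '' W).ncard + ((fun w => (v,w,u)) '' W).ncard +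
              ((fun w => (w,u,v)) '' W).ncard + ((fun w => (w,v,u)) '' W).ncard :=
              Nat.add_le_add_right (Nat.add_le_add_right (Nat.add_le_add_right
                (Nat.add_le_add_right (Set.ncard_union_le _ _) _) _) _) _
          _ ≤ C + C + C + C + C + C := by
              refine Nat.add_le_add (Nat.add_le_add (Nat.add_le_add (Nat.add_le_add
                (Nat.add_le_add (him _) (him _)) (him _)) (him _)) (him _)) (him _)
          _ = 6*C := by omega
      have hT : (TriSet G).ncard ≤ (TriSet G').ncard + 6*C := by
        calc (TriSet G).ncard ≤ (TriSet G' ∪ L).ncard :=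
              Set.ncard_le_ncard hsub (Set.toFinite _)
          _ ≤ (TriSet G').ncard + L.ncard := Set.ncard_union_le _ _
          _ ≤ (TriSet G').ncard + 6*C := Nat.add_le_add_left hLcard _
      have hrec : 6*C * G'.edgeSet.ncard < (TriSet G').ncard := by
        have : 6*C * G.edgeSet.ncard = 6*C * G'.edgeSet.ncard + 6*C := by
          rw [hcard']
          have : G.edgeSet.ncard - 1 + 1 = G.edgeSet.ncard := by omega
          nlinarith [this]
        omega
      obtain ⟨H, hH1, hH2, hH3⟩ := ih G' (by omega) hrec
      exact ⟨H, le_trans hH1 hle, hH2, hH3⟩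


/-- a properly edge-coloured graph with no rainbow `C_{2k}` has at most
`C·|E(G)|` triangles, for a constant `C` depending only on `k`.  (This yields
`ex(n, C₃, rainbow-C_{2k}) = O(ex*(n, C_{2k}))`.) -/
theorem triangles_le_const_mul_edges (k : ℕ) (hk : 2 ≤ k) :
    ∃ C : ℕ, ∀ (V : Type) [Fintype V] (G : SimpleGraph V) (γ : Type) (c : Sym2 V → γ),
      ProperColoring G c → ¬ HasRainbowCycle G c (2 * k) →
      {t : V × V × V | G.Adj t.1 t.2.1 ∧ G.Adj t.2.1 t.2.2 ∧ G.Adj t.1 t.2.2}.ncard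
        ≤ C * G.edgeSet.ncard := by
  refine ⟨600*k, ?_⟩
  intro V _ G γ c hc hnr
  by_contra hgt
  push_neg at hgt
  have hgt' : 6*(100*k) * G.edgeSet.ncard < (TriSet G).ncard := by
    have : (TriSet G) =
        {t : V × V × V | G.Adj t.1 t.2.1 ∧ G.Adj t.2.1 t.2.2 ∧ G.Adj t.1 t.2.2} := rfl
    rw [this]
    calc 6*(100*k) * G.edgeSet.ncard = 600*k * G.edgeSet.ncard := by ring_nf
      _ < _ := hgt
  obtain ⟨H, hle, ⟨u0, v0, h0⟩, hmin⟩ := reduce (100*k) (G.edgeSet.ncard) G le_rfl hgt'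
  have hcH : ProperColoring H c := fun e f he hf =>
    hc e f (SimpleGraph.edgeSet_mono hle he) (SimpleGraph.edgeSet_mono hle hf)
  obtain ⟨u, w, hcyc, hlen, hnd⟩ := greedy H c hcH k hk hmin u0 v0 h0
  apply hnr
  have hedges : ∀ e ∈ w.edges, e ∈ G.edgeSet :=
    fun e he => SimpleGraph.edgeSet_mono hle (w.edges_subset_edgeSet he)
  exact ⟨u, w.transfer G hedges, hcyc.transfer hedges, by
    rw [SimpleGraph.Walk.length_transfer]; exact hlen, by
    rw [SimpleGraph.Walk.edges_transfer]; exact hnd⟩
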